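/- Let C be a category and F, G : C ⥤ Set functors. Let D_{FΔG} be the set of triples (X, x₀, x₁) with X an object of C, x₀ ∈ F X and x₁ ∈ G X, with the relation (X, x₀, x₁) ≤ (Y, y₀, y₁) iff there exists f : X ⟶ Y with F(f)(x₀) = y₀ and G(f)(x₁) = y₁; this relation is reflexive and transitive. Let 𝒟 be the set of finite subsets of D_{FΔG} with the free inf-lattice preorder (A ≤ B iff for every b ∈ B there exists a ∈ A with a ≤ b), and let λ_X : F X × G X → 𝒟 be the map (x₀, x₁) ↦ {(X, x₀, x₁)}. Then for every partially ordered meet-semilattice H with greatest element ⊤ and every family of functions φ_X : F X × G X → H (one for each object X of C) satisfying φ_X(x₀, x₁) ≤ φ_Y(F(f)(x₀), G(f)(x₁)) for every morphism f : X ⟶ Y, there is a unique function φ : 𝒟 → H that is monotone, satisfies φ(∅) = ⊤ and φ(A ∪ B) = φ(A) ⊓ φ(B), and satisfies φ ∘ λ_X = φ_X for every X. -/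

import Mathlib

open CategoryTheory

universe u v w w'

/-- The diagram `D_{FΔG}` of a pair of set-valued functors: triples
`(X, x₀, x₁)` with `x₀ ∈ F X`, `x₁ ∈ G X`. -/
def DFG {C : Type u} [Category.{v} C] (F G : C ⥤ Type w) : Type (max u w) :=
  Σ X : C, F.obj X × G.obj X

/-- The preorder relation on `D_{FΔG}` : `(X, x₀, x₁) ≤ (Y, y₀, y₁)` iff there
is `f : X ⟶ Y` with `F(f)(x₀) = y₀` and `G(f)(x₁) = y₁`. -/
def DFG.le {C : Type u} [Category.{v} C] {F G : C ⥤ Type w}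
    (d e : DFG F G) : Prop :=
  ∃ f : d.1 ⟶ e.1, F.map f d.2.1 = e.2.1 ∧ G.map f d.2.2 = e.2.2

/-- The free inf-lattice preorder on finite subsets of `D_{FΔG}`. -/
def DFG.finLe {C : Type u} [Category.{v} C] {F G : C ⥤ Type w}
    (A B : Finset (DFG F G)) : Prop :=
  ∀ b ∈ B, ∃ a ∈ A, DFG.le a b

/-- Universal property of the free inf-lattice `𝒟(D_{FΔG})` on the diagram of
natural relations between two set-valued functors `F` and `G`. -/
theorem stmt2 {C : Type u} [Category.{v} C] (F G : C ⥤ Type w)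
    [DecidableEq (DFG F G)] :
    -- the relation on `D_{FΔG}` is reflexive and transitive
    (∀ d : DFG F G, DFG.le d d) ∧
    (∀ d e k : DFG F G, DFG.le d e → DFG.le e k → DFG.le d k) ∧
    -- the universal property
    (∀ (H : Type w') [SemilatticeInf H] [OrderTop H]
      (φ : ∀ X : C, F.obj X × G.obj X → H),
      (∀ {X Y : C} (f : X ⟶ Y) (x₀ : F.obj X) (x₁ : G.obj X),
        φ X (x₀, x₁) ≤ φ Y (F.map f x₀, G.map f x₁)) →
      ∃! ψ : Finset (DFG F G) → H,
        (∀ A B : Finset (DFG F G), DFG.finLe A B → ψ A ≤ ψ B) ∧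
        ψ ∅ = ⊤ ∧
        (∀ A B : Finset (DFG F G), ψ (A ∪ B) = ψ A ⊓ ψ B) ∧
        (∀ (X : C) (x₀ : F.obj X) (x₁ : G.obj X),
          ψ {⟨X, (x₀, x₁)⟩} = φ X (x₀, x₁))) := by
  refine ⟨fun d => ⟨𝟙 d.1, by simp, by simp⟩,
    fun d e k ⟨f, hf1, hf2⟩ ⟨g, hg1, hg2⟩ =>
      ⟨f ≫ g, by simp [FunctorToTypes.map_comp_apply, hf1, hg1],
        by simp [FunctorToTypes.map_comp_apply, hf2, hg2]⟩, ?_⟩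
  intro H _ _ φ hφ
  refine ⟨fun A => A.inf (fun d => φ d.1 d.2), ⟨?_, ?_, ?_, ?_⟩, ?_⟩
  · intro A B h
    refine Finset.le_inf fun b hb => ?_
    obtain ⟨a, ha, f, hf1, hf2⟩ := h b hb
    exact le_trans (Finset.inf_le ha) (by
      have := hφ f a.2.1 a.2.2
      rw [hf1, hf2] at this
      simpa using this)
  · simp
  · intro A B; exact Finset.inf_union
  · intro X x₀ x₁; exact Finset.inf_singleton
  · intro ψ ⟨hmono, hempty, hunion, hsing⟩
    funext A
    induction A using Finset.induction with
    | empty => simp [hempty]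
    | @insert d A hd ih =>
      have : insert d A = {d} ∪ A := by ext x; simp
      rw [this, hunion, ih, Finset.inf_union]
      have h2 := hsing d.1 d.2.1 d.2.2
      simp only [show (⟨d.1,(d.2.1,d.2.2)⟩ : DFG F G) = d from rfl] at h2
      rw [h2]; simp
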